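/- (Symmetric form of Ĩ∘B⁻¹∘E_ab⁻¹.) For every integrable h : α → ℝ and every x ∈ α, the average-free part of B⁻¹·(E_ab⁻¹ h) at x equals A(x)·h(x) − A(x)·(∫ A·h dμ)/(∫ A dμ); that is, B(x)⁻¹·(E_ab⁻¹ h)(x) − ⟨B⁻¹·(E_ab⁻¹ h)⟩ = A(x)·h(x) − A(x)·(∫ A·h dμ)/(∫ A dμ). -/

import Mathlib

open MeasureTheory

/-- Total (coordinate) volume `V := μ(α)` as a real number. -/
noncomputable def totalVol {α : Type*} [MeasurableSpace α] (μ : Measure α) : ℝ :=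
  (μ Set.univ).toReal

/-- Spatial average `⟨f⟩ := (1/V) ∫ f dμ`. -/
noncomputable def avg {α : Type*} [MeasurableSpace α] (μ : Measure α) (f : α → ℝ) : ℝ :=
  (totalVol μ)⁻¹ * ∫ x, f x ∂μ

/-- The generalized delocalization operator `E_ab`:
`(E_ab f)(x) = ⟨f⟩ + A(x)⁻¹·(B(x)⁻¹·f(x) − ⟨B⁻¹·f⟩)`. -/
noncomputable def opEab {α : Type*} [MeasurableSpace α] (μ : Measure α) (A B : α → ℝ)
    (f : α → ℝ) : α → ℝ :=
  fun x => avg μ f + (A x)⁻¹ * ((B x)⁻¹ * f x - avg μ (fun y => (B y)⁻¹ * f y))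

/-- The operator `E_ab⁻¹`:
`(E_ab⁻¹ h)(x) = B(x)·A(x)·h(x) − B(x)·A(x)·(∫A·h)/(∫A) − B(x)·(∫B·A·h)/(∫B)
  + B(x)·((V + ∫B·A)/(∫B))·(∫A·h)/(∫A)`. -/
noncomputable def opEabInv {α : Type*} [MeasurableSpace α] (μ : Measure α) (A B : α → ℝ)
    (h : α → ℝ) : α → ℝ :=
  fun x => B x * A x * h x
    - B x * A x * (∫ y, A y * h y ∂μ) / (∫ y, A y ∂μ)
    - B x * (∫ y, B y * A y * h y ∂μ) / (∫ y, B y ∂μ)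
    + B x * ((totalVol μ + ∫ y, B y * A y ∂μ) / (∫ y, B y ∂μ))
        * (∫ y, A y * h y ∂μ) / (∫ y, A y ∂μ)

/-- Symmetric form of `Ĩ∘B⁻¹∘E_ab⁻¹`.
For every integrable `h` and every `x`:
`B(x)⁻¹·(E_ab⁻¹ h)(x) − ⟨B⁻¹·(E_ab⁻¹ h)⟩ = A(x)·h(x) − A(x)·(∫ A·h dμ)/(∫ A dμ)`. -/
theorem opEabInv_symmetric_form
    {α : Type*} [MeasurableSpace α] (μ : Measure α) [IsFiniteMeasure μ]
    (hV : 0 < totalVol μ)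
    (A B : α → ℝ) (hA : Measurable A) (hB : Measurable B)
    (c C : ℝ) (hc : 0 < c) (hcC : c ≤ C)
    (hboundA : ∀ x, c ≤ A x ∧ A x ≤ C) (hboundB : ∀ x, c ≤ B x ∧ B x ≤ C) :
    ∀ h : α → ℝ, Integrable h μ → ∀ x,
      (B x)⁻¹ * opEabInv μ A B h x - avg μ (fun y => (B y)⁻¹ * opEabInv μ A B h y)
        = A x * h x - A x * (∫ y, A y * h y ∂μ) / (∫ y, A y ∂μ) := by
  intro h hInt x
  have hVne : totalVol μ ≠ 0 := ne_of_gt hV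
  have hBne : ∀ y, B y ≠ 0 := fun y => ne_of_gt (lt_of_lt_of_le hc (hboundB y).1)
  have hAbd : ∃ C', ∀ y, |A y| ≤ C' :=
    ⟨C, fun y => abs_le.mpr ⟨le_trans (by linarith) (hboundA y).1, (hboundA y).2⟩⟩
  have hIntAh : Integrable (fun y => A y * h y) μ :=
    hInt.bdd_mul hA.aestronglyMeasurable (ae_of_all _ (fun y => (Real.norm_eq_abs _).le.trans (hAbd.choose_spec y)))
  have hIntA : Integrable A μ := by
    have := (integrable_const (μ := μ) (1:ℝ)).bdd_mul hA.aestronglyMeasurable (ae_of_all _ (fun y => (Real.norm_eq_abs _).le.trans (hAbd.choose_spec y)))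
    simpa using this
  set V := totalVol μ with hVdef
  set I1 := ∫ y, A y * h y ∂μ with hI1
  set IA := ∫ y, A y ∂μ with hIA
  set I2 := ∫ y, B y * A y * h y ∂μ with hI2
  set I3 := ∫ y, B y * A y ∂μ with hI3
  set IB := ∫ y, B y ∂μ with hIB
  have hIAlb : c * V ≤ IA := by
    have := integral_mono (integrable_const c) hIntA (fun y => (hboundA y).1)
    rw [integral_const] at this
    simpa [smul_eq_mul, mul_comm, hVdef, totalVol, Measure.real] using this
  have hIApos : 0 < IA := lt_of_lt_of_le (by positivity) hIAlb
  have hIAne : IA ≠ 0 := ne_of_gt hIApos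
  set K : ℝ := -(I2 / IB) + V * ((V + I3) / IB * I1 / IA) * V⁻¹ with hK
  have key : ∀ y, (B y)⁻¹ * opEabInv μ A B h y
      = (A y * h y - A y * (I1 / IA)) + (-(I2 / IB) + (V + I3) / IB * I1 / IA) := by
    intro y
    simp only [opEabInv, ← hVdef, ← hI1, ← hIA, ← hI2, ← hI3, ← hIB]
    field_simp [hBne y]
    ring
  have havg : avg μ (fun y => (B y)⁻¹ * opEabInv μ A B h y)
      = -(I2 / IB) + (V + I3) / IB * I1 / IA := by
    have hfun : (fun y => (B y)⁻¹ * opEabInv μ A B h y)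
        = fun y => (A y * h y - A y * (I1 / IA))
          + (-(I2 / IB) + (V + I3) / IB * I1 / IA) := funext key
    have hsub : Integrable (fun y => A y * h y - A y * (I1 / IA)) μ :=
      hIntAh.sub (hIntA.mul_const _)
    rw [hfun]
    simp only [avg]
    rw [integral_add hsub (integrable_const _),
      integral_sub hIntAh (hIntA.mul_const _), integral_mul_const, integral_const]
    rw [← hI1, ← hIA, ← hVdef,
      show μ.real Set.univ = V from by rw [hVdef]; rfl]
    rw [smul_eq_mul]
    field_simp
    ring
  rw [key x, havg]
  field_simp
  ring
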